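/- Proposition 2: For every d×d complex density matrix ρ in odd dimension d ≥ 3 with S_R ≤ 1/√(d−1), the quantities S_R and S_I satisfy √d · S_I ≤ √(d−1) + S_R. -/

import Mathlib

open Matrix
open scoped ComplexOrder

noncomputable section

/-- A density matrix: positive semidefinite with unit trace. -/
def IsDensityMatrix {d : ℕ} (ρ : Matrix (Fin d) (Fin d) ℂ) : Prop :=
  ρ.PosSemidef ∧ ρ.trace = 1

/-- The real part `R = (d/2)(ρ + ρᵀ)`. -/
def Rpart (d : ℕ) (ρ : Matrix (Fin d) (Fin d) ℂ) : Matrix (Fin d) (Fin d) ℂ :=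
  ((d : ℂ) / 2) • (ρ + ρ.transpose)

/-- The imaginary part `I = (d/2)(ρ − ρᵀ)`. -/
def Ipart (d : ℕ) (ρ : Matrix (Fin d) (Fin d) ℂ) : Matrix (Fin d) (Fin d) ℂ :=
  ((d : ℂ) / 2) • (ρ - ρ.transpose)

/-- `S_R = √(Tr(R²)/d − 1)`. -/
def SR (d : ℕ) (ρ : Matrix (Fin d) (Fin d) ℂ) : ℝ :=
  Real.sqrt ((Rpart d ρ * Rpart d ρ).trace.re / d - 1)

/-- `S_I = √(Tr(I²)/d)`. -/
def SI (d : ℕ) (ρ : Matrix (Fin d) (Fin d) ℂ) : ℝ :=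
  Real.sqrt ((Ipart d ρ * Ipart d ρ).trace.re / d)

/-- **Proposition 2.** For every `d×d` density matrix in odd dimension
`d ≥ 3` with `S_R ≤ 1/√(d−1)`, we have `√d · S_I ≤ √(d−1) + S_R`. -/
lemma key_ineq (d : ℕ) (hd : 3 ≤ d) (r μ : Fin d → ℝ) (j₀ : Fin d) (hμ0 : μ j₀ = 0)
    (h1 : ∀ j, 0 ≤ r j + μ j) (h2 : ∀ j, 0 ≤ r j - μ j)
    (hsumr : ∑ j, r j = d) {T M : ℝ} (hT : ∑ j, (r j)^2 ≤ T) (hM : M = ∑ j, (μ j)^2)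
    (hSRle : Real.sqrt (T/d - 1) ≤ 1 / Real.sqrt ((d:ℝ)-1)) :
    Real.sqrt d * Real.sqrt (M/d) ≤ Real.sqrt ((d:ℝ)-1) + Real.sqrt (T/d-1) := by
  have hd3 : (3:ℝ) ≤ (d:ℝ) := by exact_mod_cast hd
  have hdpos : (0:ℝ) < d := by linarith
  have hd1 : (0:ℝ) < (d:ℝ) - 1 := by linarith
  set a : ℝ := T/d - 1 with ha_def
  have hTa : T = d*(a+1) := by rw [ha_def]; field_simp; ring
  -- a ≥ 0
  have hcs : (∑ j, r j)^2 ≤ (d:ℝ) * ∑ j, (r j)^2 := by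
    simpa using sq_sum_le_card_mul_sum_sq (s := (Finset.univ : Finset (Fin d))) (f := r)
  have ha : 0 ≤ a := by
    rw [hsumr] at hcs
    have hdT : (d:ℝ) ≤ T := by
      nlinarith [hcs, mul_le_mul_of_nonneg_left hT hdpos.le]
    have h7 : (1:ℝ) ≤ T/d := (one_le_div hdpos).2 hdT
    rw [ha_def]; linarith
  have ha1 : a ≤ 1/((d:ℝ)-1) := by
    calc a = Real.sqrt a ^ 2 := (Real.sq_sqrt ha).symm
    _ ≤ (1/Real.sqrt ((d:ℝ)-1))^2 := by
        apply pow_le_pow_left₀ (Real.sqrt_nonneg _) hSRle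
    _ = 1/((d:ℝ)-1) := by rw [div_pow, one_pow, Real.sq_sqrt hd1.le]
  set t : ℝ := r j₀ with ht_def
  have ht0 : 0 ≤ t := by have := h1 j₀; rw [hμ0] at this; linarith
  have hcard : ((Finset.univ : Finset (Fin d)).erase j₀).card = d - 1 := by
    simp [Finset.card_erase_of_mem]
  have hcs2 : (∑ j ∈ Finset.univ.erase j₀, r j)^2
      ≤ ((d:ℝ)-1) * ∑ j ∈ Finset.univ.erase j₀, (r j)^2 := by
    have h := sq_sum_le_card_mul_sum_sq (s := Finset.univ.erase j₀) (f := r)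
    rw [hcard] at h
    have : ((d - 1 : ℕ) : ℝ) = (d:ℝ) - 1 := by
      push_cast [Nat.cast_sub (by omega : 1 ≤ d)]; ring
    rwa [this] at h
  have hesum : ∑ j ∈ Finset.univ.erase j₀, r j = d - t := by
    have := Finset.add_sum_erase Finset.univ r (Finset.mem_univ j₀)
    rw [← ht_def] at this; linarith [hsumr, this]
  have hesq : ∑ j ∈ Finset.univ.erase j₀, (r j)^2 = (∑ j, (r j)^2) - t^2 := by
    have h := Finset.add_sum_erase Finset.univ (fun j => (r j)^2) (Finset.mem_univ j₀)
    beta_reduce at h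
    rw [← ht_def] at h; linarith
  have hMsum : M ≤ T - t^2 := by
    rw [hM]
    have hμe : ∑ j, (μ j)^2 = ∑ j ∈ Finset.univ.erase j₀, (μ j)^2 := by
      have h := Finset.add_sum_erase Finset.univ (fun j => (μ j)^2) (Finset.mem_univ j₀)
      beta_reduce at h
      rw [hμ0] at h
      linarith
    rw [hμe]
    calc ∑ j ∈ Finset.univ.erase j₀, (μ j)^2
        ≤ ∑ j ∈ Finset.univ.erase j₀, (r j)^2 :=
          Finset.sum_le_sum (fun j _ => by nlinarith [h1 j, h2 j])
    _ = (∑ j, (r j)^2) - t^2 := hesq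
    _ ≤ T - t^2 := by linarith
  have hkey : (t-1)^2 ≤ ((d:ℝ)-1)*a := by
    rw [hesum, hesq] at hcs2
    have h5 : ((d:ℝ)-t)^2 ≤ ((d:ℝ)-1)*(T - t^2) := by nlinarith [hT, hd1]
    rw [hTa] at h5
    nlinarith [h5, hdpos]
  set s1 := Real.sqrt ((d:ℝ)-1) with hs1_def
  set s2 := Real.sqrt a with hs2_def
  have e1 : s1^2 = (d:ℝ)-1 := Real.sq_sqrt hd1.le
  have e2 : s2^2 = a := Real.sq_sqrt ha
  have es : Real.sqrt (((d:ℝ)-1)*a) = s1*s2 := Real.sqrt_mul hd1.le a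
  have ht1 : 1 - s1*s2 ≤ t := by
    have h6 : |t-1| ≤ s1*s2 := by
      rw [← es, ← Real.sqrt_sq_eq_abs]
      exact Real.sqrt_le_sqrt hkey
    have := neg_abs_le (t-1); linarith
  have hs1s2 : s1*s2 ≤ 1 := by
    have hda : ((d:ℝ)-1)*a ≤ 1 := by
      have := (le_div_iff₀ hd1).mp ha1
      linarith [this]
    rw [← es]
    exact Real.sqrt_le_one.mpr hda
  have ht2 : (1 - s1*s2)^2 ≤ t^2 := by
    apply pow_le_pow_left₀ (by linarith) ht1
  have expand : (d:ℝ)*(a+1) - (1 - s1*s2)^2 = (s1+s2)^2 := by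
    linear_combination (-(s2^2) - 1)*e1 + (-((d:ℝ)-1) - 1)*e2
  have hfin : M ≤ (s1+s2)^2 := by
    rw [hTa] at hMsum
    linarith
  have hMnonneg : 0 ≤ M := by
    rw [hM]; exact Finset.sum_nonneg (fun _ _ => sq_nonneg _)
  calc Real.sqrt d * Real.sqrt (M/d) = Real.sqrt ((d:ℝ)*(M/d)) :=
        (Real.sqrt_mul hdpos.le _).symm
  _ = Real.sqrt M := by rw [mul_comm, div_mul_cancel₀ M (ne_of_gt hdpos)]
  _ ≤ Real.sqrt ((s1+s2)^2) := Real.sqrt_le_sqrt hfin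
  _ = s1 + s2 := Real.sqrt_sq (by positivity)

lemma psd_diag_re_nonneg {n : ℕ} {A : Matrix (Fin n) (Fin n) ℂ} (hA : A.PosSemidef)
    (j : Fin n) : 0 ≤ (A j j).re := by
  have h := hA.re_dotProduct_nonneg (Pi.single j 1)
  simpa [Matrix.mulVec, dotProduct, Pi.single_apply, Pi.star_apply, apply_ite (star : ℂ → ℂ)] using h

theorem linear_bound (d : ℕ) (hd : 3 ≤ d) (hdodd : Odd d)
    (ρ : Matrix (Fin d) (Fin d) ℂ) (hρ : IsDensityMatrix ρ)
    (hSR : SR d ρ ≤ 1 / Real.sqrt ((d : ℝ) - 1)) :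
    Real.sqrt d * SI d ρ ≤ Real.sqrt ((d : ℝ) - 1) + SR d ρ := by
  classical
  obtain ⟨hpsd, htr⟩ := hρ
  have hHρ : ρ.IsHermitian := hpsd.1
  unfold SR at hSR
  unfold SR SI
  set R := Rpart d ρ with hR_def
  set I := Ipart d ρ with hI_def
  have hstar_c : star ((d:ℂ)/2) = (d:ℂ)/2 := by simp
  have hRH : R.IsHermitian := by
    show Rᴴ = R
    rw [hR_def]; unfold Rpart
    rw [conjTranspose_smul, conjTranspose_add, hHρ.eq, hHρ.transpose.eq, hstar_c]
  have hIH : I.IsHermitian := by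
    show Iᴴ = I
    rw [hI_def]; unfold Ipart
    rw [conjTranspose_smul, conjTranspose_sub, hHρ.eq, hHρ.transpose.eq, hstar_c]
  set μ : Fin d → ℝ := hIH.eigenvalues with hμ_def
  set V : Matrix (Fin d) (Fin d) ℂ := (hIH.eigenvectorUnitary : Matrix (Fin d) (Fin d) ℂ)
    with hV_def
  have hVV : V * Vᴴ = 1 := by
    rw [← Matrix.star_eq_conjTranspose]
    exact mem_unitaryGroup_iff.mp (hIH.eigenvectorUnitary).2
  have hV'V : Vᴴ * V = 1 := by
    rw [← Matrix.star_eq_conjTranspose]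
    exact mem_unitaryGroup_iff'.mp (hIH.eigenvectorUnitary).2
  have trconj : ∀ A : Matrix (Fin d) (Fin d) ℂ, (Vᴴ * A * V).trace = A.trace := by
    intro A
    rw [trace_mul_cycle, hVV, Matrix.one_mul]
  have conj_mul : ∀ A B : Matrix (Fin d) (Fin d) ℂ,
      Vᴴ * (A * B) * V = (Vᴴ * A * V) * (Vᴴ * B * V) := by
    intro A B
    have h : A * B = A * (V * Vᴴ) * B := by rw [hVV, Matrix.mul_one]
    rw [h]
    simp only [Matrix.mul_assoc]
  have hcoe : (RCLike.ofReal : ℝ → ℂ) = Complex.ofReal := rfl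
  set Dμ : Matrix (Fin d) (Fin d) ℂ := diagonal (fun j => ((μ j : ℝ) : ℂ)) with hD_def
  have hdiag : Vᴴ * I * V = Dμ := by
    have h : star V * I * V = diagonal (RCLike.ofReal ∘ hIH.eigenvalues) := by
      have h0 := hIH.conjStarAlgAut_star_eigenvectorUnitary
      rwa [Unitary.conjStarAlgAut_star_apply] at h0
    rw [Matrix.star_eq_conjTranspose] at h
    rw [h, hD_def]
    congr 1
  set R' := Vᴴ * R * V with hR'_def
  have hR'H : R'.IsHermitian := isHermitian_conjTranspose_mul_mul V hRH
  have hρ' : (Vᴴ * ρ * V).PosSemidef := hpsd.conjTranspose_mul_mul_same V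
  have hσ' : (Vᴴ * ρᵀ * V).PosSemidef := hpsd.transpose.conjTranspose_mul_mul_same V
  have hRIsum : R + I = (d:ℂ) • ρ := by
    rw [hR_def, hI_def]; unfold Rpart Ipart
    ext i j
    simp only [Matrix.add_apply, Matrix.sub_apply, Matrix.smul_apply, Matrix.transpose_apply,
      smul_eq_mul]
    ring
  have hRIdiff : R - I = (d:ℂ) • ρᵀ := by
    rw [hR_def, hI_def]; unfold Rpart Ipart
    ext i j
    simp only [Matrix.add_apply, Matrix.sub_apply, Matrix.smul_apply, Matrix.transpose_apply,
      smul_eq_mul]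
    ring
  have hplus : R' + Dμ = (d:ℂ) • (Vᴴ * ρ * V) := by
    rw [hR'_def, ← hdiag]
    calc Vᴴ*R*V + Vᴴ*I*V = Vᴴ*(R+I)*V := by rw [Matrix.mul_add, Matrix.add_mul]
    _ = Vᴴ*((d:ℂ)•ρ)*V := by rw [hRIsum]
    _ = (d:ℂ)•(Vᴴ*ρ*V) := by rw [Matrix.mul_smul, Matrix.smul_mul]
  have hminus : R' - Dμ = (d:ℂ) • (Vᴴ * ρᵀ * V) := by
    rw [hR'_def, ← hdiag]
    calc Vᴴ*R*V - Vᴴ*I*V = Vᴴ*(R-I)*V := by rw [Matrix.mul_sub, Matrix.sub_mul]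
    _ = Vᴴ*((d:ℂ)•ρᵀ)*V := by rw [hRIdiff]
    _ = (d:ℂ)•(Vᴴ*ρᵀ*V) := by rw [Matrix.mul_smul, Matrix.smul_mul]
  have h1 : ∀ j, 0 ≤ (R' j j).re + μ j := by
    intro j
    have e := congrFun (congrFun hplus j) j
    have e2 : (R' j j).re + μ j = (d:ℝ) * ((Vᴴ*ρ*V) j j).re := by
      have := congrArg Complex.re e
      simpa [Matrix.add_apply, Matrix.smul_apply, hD_def, Matrix.diagonal_apply_eq,
        smul_eq_mul, Complex.mul_re] using this
    have e3 := psd_diag_re_nonneg hρ' j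
    have e4 : (0:ℝ) ≤ (d:ℝ) := Nat.cast_nonneg d
    nlinarith [mul_nonneg e4 e3]
  have h2 : ∀ j, 0 ≤ (R' j j).re - μ j := by
    intro j
    have e := congrFun (congrFun hminus j) j
    have e2 : (R' j j).re - μ j = (d:ℝ) * ((Vᴴ*ρᵀ*V) j j).re := by
      have := congrArg Complex.re e
      simpa [Matrix.sub_apply, Matrix.smul_apply, hD_def, Matrix.diagonal_apply_eq,
        smul_eq_mul, Complex.mul_re] using this
    have e3 := psd_diag_re_nonneg hσ' j
    have e4 : (0:ℝ) ≤ (d:ℝ) := Nat.cast_nonneg d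
    nlinarith [mul_nonneg e4 e3]
  have hsum_r : ∑ j, (R' j j).re = (d:ℝ) := by
    have h : R'.trace = R.trace := by rw [hR'_def]; exact trconj R
    have hRtr : R.trace = (d:ℂ) := by
      rw [hR_def]; unfold Rpart
      rw [trace_smul, trace_add, trace_transpose, htr]
      simp only [smul_eq_mul]
      ring
    have h5 : R'.trace = ∑ j, R' j j := by simp [Matrix.trace, Matrix.diag]
    have h6 : (R'.trace).re = ∑ j, (R' j j).re := by rw [h5]; exact Complex.re_sum _ _
    rw [← h6, h, hRtr]
    simp
  have hT : ∑ j, ((R' j j).re)^2 ≤ (R*R).trace.re := by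
    have hRR : (R*R).trace = (R'*R').trace := by
      rw [hR'_def, ← conj_mul, trconj]
    rw [hRR]
    have htrace : (R'*R').trace.re = ∑ j, ∑ k, Complex.normSq (R' j k) := by
      have h5 : (R'*R').trace = ∑ j, ∑ k, R' j k * R' k j := by
        simp [Matrix.trace, Matrix.diag, Matrix.mul_apply]
      rw [h5, Complex.re_sum]
      apply Finset.sum_congr rfl
      intro j _
      rw [Complex.re_sum]
      apply Finset.sum_congr rfl
      intro k _
      have hconj : R' k j = (starRingEnd ℂ) (R' j k) := by
        have h7 := congrFun (congrFun hR'H.eq k) j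
        rw [Matrix.conjTranspose_apply] at h7
        exact h7.symm
      rw [hconj, Complex.mul_conj]
      simp
    rw [htrace]
    calc ∑ j, ((R' j j).re)^2 ≤ ∑ j, Complex.normSq (R' j j) := by
          apply Finset.sum_le_sum
          intro j _
          rw [Complex.normSq_apply]
          nlinarith [sq_nonneg (R' j j).im]
    _ ≤ ∑ j, ∑ k, Complex.normSq (R' j k) := by
          apply Finset.sum_le_sum
          intro j _
          exact Finset.single_le_sum (f := fun k => Complex.normSq (R' j k))
            (fun k _ => Complex.normSq_nonneg _) (Finset.mem_univ j)
  have hI2 : (I*I).trace.re = ∑ j, (μ j)^2 := by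
    have h : (I*I).trace = (Dμ*Dμ).trace := by
      rw [← trconj (I*I), conj_mul, hdiag]
    rw [h, hD_def, diagonal_mul_diagonal, trace_diagonal, Complex.re_sum]
    apply Finset.sum_congr rfl
    intro j _
    rw [← Complex.ofReal_mul, Complex.ofReal_re, sq]
  have hdet : I.det = 0 := by
    have hIT : Iᵀ = -I := by
      rw [hI_def]; unfold Ipart
      rw [transpose_smul, transpose_sub, transpose_transpose, ← neg_sub, smul_neg]
    have h := I.det_transpose
    rw [hIT, Matrix.det_neg, Fintype.card_fin, hdodd.neg_one_pow] at h
    have h8 : (2:ℂ) * I.det = 0 := by linear_combination -h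
    exact (mul_eq_zero.mp h8).resolve_left two_ne_zero
  obtain ⟨j₀, -, hμj₀C⟩ : ∃ j₀ ∈ Finset.univ, ((μ j₀ : ℝ) : ℂ) = 0 := by
    apply Finset.prod_eq_zero_iff.mp
    have h9 := hIH.det_eq_prod_eigenvalues
    rw [hdet] at h9
    simp only [hcoe] at h9
    rw [hμ_def]
    exact h9.symm
  have hμ0 : μ j₀ = 0 := by exact_mod_cast hμj₀C
  rw [hI2]
  exact key_ineq d hd (fun j => (R' j j).re) μ j₀ hμ0 h1 h2 hsum_r hT rfl hSR
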